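/- Let T1 < T2 be real numbers, let (λ_n)_{n≥1} be a strictly increasing sequence of positive real numbers, and let (a_n)_{n≥1} be real numbers such that the series ∑_{n=1}^∞ |a_n| e^{-λ_n T1} converges. If ∑_{n=1}^∞ a_n e^{-λ_n t} = 0 for every t with T1 < t < T2, then ∑_{n=1}^∞ a_n e^{-λ_n t} = 0 for every t > T1. -/

import Mathlib

open Real

theorem dirichlet_series_continuation
    (T1 T2 : ℝ) (hT : T1 < T2)
    (lam : ℕ → ℝ) (hmono : StrictMono lam) (hpos : ∀ n, 0 < lam n)
    (a : ℕ → ℝ)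
    (hsum : Summable (fun n => |a n| * Real.exp (-(lam n) * T1)))
    (hzero : ∀ t, T1 < t → t < T2 → ∑' n, a n * Real.exp (-(lam n) * t) = 0) :
    ∀ t, T1 < t → ∑' n, a n * Real.exp (-(lam n) * t) = 0 := by
  set U : Set ℂ := {z | T1 < z.re} with hU
  set F : ℂ → ℂ := fun z => ∑' n, (a n : ℂ) * Complex.exp (-(lam n : ℂ) * z) with hF
  have hUopen : IsOpen U := isOpen_lt continuous_const Complex.continuous_re
  -- norm bound
  have hbound : ∀ (n : ℕ) (w : ℂ), w ∈ U →
      ‖(a n : ℂ) * Complex.exp (-(lam n : ℂ) * w)‖ ≤ |a n| * Real.exp (-(lam n) * T1) := by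
    intro n w hw
    have hwre : T1 < w.re := hw
    rw [norm_mul, Complex.norm_real, Real.norm_eq_abs, Complex.norm_exp]
    have hre : (-(lam n : ℂ) * w).re = -(lam n) * w.re := by simp
    rw [hre]
    have hle : Real.exp (-lam n * w.re) ≤ Real.exp (-lam n * T1) :=
      Real.exp_le_exp.mpr (by nlinarith [(hpos n).le])
    exact mul_le_mul_of_nonneg_left hle (abs_nonneg _)
  -- differentiability of F on U
  have hdiff : DifferentiableOn ℂ F U := by
    apply Complex.differentiableOn_tsum_of_summable_norm hsum _ hUopen hbound
    intro n
    exact (Differentiable.mul (differentiable_const _)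
      (Complex.differentiable_exp.comp ((differentiable_const _).mul differentiable_id))).differentiableOn
  have hanalytic : AnalyticOnNhd ℂ F U := hdiff.analyticOnNhd hUopen
  -- real summability for t > T1
  have hsummable : ∀ t : ℝ, T1 < t → Summable (fun n => a n * Real.exp (-(lam n) * t)) := by
    intro t ht
    apply Summable.of_norm
    apply hsum.of_nonneg_of_le (fun n => norm_nonneg _)
    intro n
    rw [Real.norm_eq_abs, abs_mul, Real.abs_exp]
    have : Real.exp (-lam n * t) ≤ Real.exp (-lam n * T1) :=
      Real.exp_le_exp.mpr (by nlinarith [(hpos n).le, ht.le])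
    exact mul_le_mul_of_nonneg_left this (abs_nonneg _)
  -- F at real t equals coercion of real sum
  have hFreal : ∀ t : ℝ, F (t : ℂ) = ((∑' n, a n * Real.exp (-(lam n) * t) : ℝ) : ℂ) := by
    intro t
    have h1 : F (t : ℂ) = ∑' n, ((a n * Real.exp (-(lam n) * t) : ℝ) : ℂ) := by
      rw [hF]
      exact tsum_congr fun n => by push_cast [Complex.ofReal_exp]; ring_nf
    rw [h1, ← Complex.ofReal_tsum]
  -- pick z₀ on the real segment
  set t0 : ℝ := (T1 + T2) / 2 with ht0
  have ht0a : T1 < t0 := by simp [ht0]; linarith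
  have ht0b : t0 < T2 := by simp [ht0]; linarith
  have hz0U : (t0 : ℂ) ∈ U := by simpa [hU] using ht0a
  -- frequently zero near z₀
  have hfreq : ∃ᶠ z in nhdsWithin (t0 : ℂ) {(t0 : ℂ)}ᶜ, F z = 0 := by
    set u : ℕ → ℂ := fun k => ((t0 + min (1 : ℝ) ((T2 - t0)/2) / (k + 2) : ℝ) : ℂ) with hu
    have hδpos : 0 < min (1 : ℝ) ((T2 - t0)/2) := by
      apply lt_min one_pos; linarith
    have htend : Filter.Tendsto u Filter.atTop (nhdsWithin (t0 : ℂ) {(t0 : ℂ)}ᶜ) := by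
      apply tendsto_nhdsWithin_of_tendsto_nhds_of_eventually_within
      · have : Filter.Tendsto (fun k : ℕ => t0 + min (1 : ℝ) ((T2 - t0)/2) / (k + 2))
            Filter.atTop (nhds t0) := by
          have h2 : Filter.Tendsto (fun k : ℕ => min (1 : ℝ) ((T2 - t0)/2) / (k + 2))
              Filter.atTop (nhds 0) := by
            apply Filter.Tendsto.div_atTop tendsto_const_nhds
            exact Filter.tendsto_atTop_add_const_right _ 2 (tendsto_natCast_atTop_atTop)
          simpa using tendsto_const_nhds.add h2
        exact (Complex.continuous_ofReal.tendsto t0).comp this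
      · filter_upwards with k
        simp only [hu, Set.mem_compl_iff, Set.mem_singleton_iff]
        intro h
        have h2 := Complex.ofReal_injective h
        have hk : (0:ℝ) < min (1 : ℝ) ((T2 - t0)/2) / (k + 2) := by positivity
        linarith
    apply htend.frequently
    apply Filter.Frequently.of_forall
    intro k
    have hk : (0:ℝ) < min (1 : ℝ) ((T2 - t0)/2) / (k + 2) := by positivity
    have hle : min (1 : ℝ) ((T2 - t0)/2) / (k + 2) ≤ (T2 - t0)/2 := by
      calc min (1 : ℝ) ((T2 - t0)/2) / (k + 2) ≤ min (1 : ℝ) ((T2 - t0)/2) / 2 := by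
            apply div_le_div_of_nonneg_left hδpos.le (by norm_num) (by push_cast; linarith [Nat.cast_nonneg (α := ℝ) k])
        _ ≤ ((T2 - t0)/2) / 2 := by gcongr; exact min_le_right _ _
        _ ≤ (T2 - t0)/2 := by linarith
    rw [hu]
    simp only
    rw [hFreal]
    rw [hzero _ (by linarith) (by linarith)]
    simp
  -- U is preconnected
  have hpre : IsPreconnected U := by
    apply Convex.isPreconnected
    have : U = Complex.reCLM ⁻¹' (Set.Ioi T1) := rfl
    rw [this]
    exact (convex_Ioi T1).linear_preimage Complex.reCLM.toLinearMap
  have hEq := hanalytic.eqOn_zero_of_preconnected_of_frequently_eq_zero hpre hz0U hfreq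
  intro t ht
  have htU : (t : ℂ) ∈ U := by simpa [hU] using ht
  have h3 := hEq htU
  rw [hFreal t] at h3
  simp only [Pi.zero_apply] at h3
  exact_mod_cast h3
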